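/- Let H ∈ ℂ^{16 × 16} be the 4-qubit antiferromagnetic Heisenberg Hamiltonian on a line, H = −(1/4)·Σ_{i=1}^{3} (X_i X_{i+1} + Y_i Y_{i+1} + Z_i Z_{i+1}). Then the eigenspace of H for its largest eigenvalue λ_max = (3 + 2√3)/4 is one-dimensional, and every other eigenvalue of H is at most λ_max − (1 + √3 − √2)/2; that is, the spectral gap between the largest and second-largest eigenvalues of H equals (1 + √3 − √2)/2. -/
import Mathlib


open Matrix
open scoped Kronecker

noncomputable section

/-- Pauli X. -/
def pauliX : Matrix (Fin 2) (Fin 2) ℂ := !![0, 1; 1, 0]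
/-- Pauli Y. -/
def pauliY : Matrix (Fin 2) (Fin 2) ℂ := !![0, -Complex.I; Complex.I, 0]
/-- Pauli Z. -/
def pauliZ : Matrix (Fin 2) (Fin 2) ℂ := !![1, 0; 0, -1]

/-- The 4-fold tensor (Kronecker) product of four 1-qubit operators. -/
def op4 (A B C D : Matrix (Fin 2) (Fin 2) ℂ) :
    Matrix (Fin 2 × Fin 2 × Fin 2 × Fin 2) (Fin 2 × Fin 2 × Fin 2 × Fin 2) ℂ :=
  A ⊗ₖ (B ⊗ₖ (C ⊗ₖ D))

/-- The 4-qubit antiferromagnetic Heisenberg Hamiltonian on a line: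
`H = -(1/4) Σ_{i=1}^{3} (X_i X_{i+1} + Y_i Y_{i+1} + Z_i Z_{i+1})`. -/
def heis4 : Matrix (Fin 2 × Fin 2 × Fin 2 × Fin 2) (Fin 2 × Fin 2 × Fin 2 × Fin 2) ℂ :=
  (-(1/4 : ℂ)) •
    (op4 pauliX pauliX 1 1 + op4 pauliY pauliY 1 1 + op4 pauliZ pauliZ 1 1
      + op4 1 pauliX pauliX 1 + op4 1 pauliY pauliY 1 + op4 1 pauliZ pauliZ 1
      + op4 1 1 pauliX pauliX + op4 1 1 pauliY pauliY + op4 1 1 pauliZ pauliZ)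

/-! ### Auxiliary data: explicit integer matrices -/

def kL : Matrix (Fin 16) (Fin 16) ℤ :=
  !![3, 0, 0, 0, 0, 0, 0, 0, 0, 0, 0, 0, 0, 0, 0, 0;
    0, 1, 2, 0, 0, 0, 0, 0, 0, 0, 0, 0, 0, 0, 0, 0;
    0, 2, -1, 0, 2, 0, 0, 0, 0, 0, 0, 0, 0, 0, 0, 0;
    0, 0, 0, 1, 0, 2, 0, 0, 0, 0, 0, 0, 0, 0, 0, 0;
    0, 0, 2, 0, -1, 0, 0, 0, 2, 0, 0, 0, 0, 0, 0, 0;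
    0, 0, 0, 2, 0, -3, 2, 0, 0, 2, 0, 0, 0, 0, 0, 0;
    0, 0, 0, 0, 0, 2, -1, 0, 0, 0, 2, 0, 0, 0, 0, 0;
    0, 0, 0, 0, 0, 0, 0, 1, 0, 0, 0, 2, 0, 0, 0, 0;
    0, 0, 0, 0, 2, 0, 0, 0, 1, 0, 0, 0, 0, 0, 0, 0;
    0, 0, 0, 0, 0, 2, 0, 0, 0, -1, 2, 0, 0, 0, 0, 0;
    0, 0, 0, 0, 0, 0, 2, 0, 0, 2, -3, 0, 2, 0, 0, 0;
    0, 0, 0, 0, 0, 0, 0, 2, 0, 0, 0, -1, 0, 2, 0, 0;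
    0, 0, 0, 0, 0, 0, 0, 0, 0, 0, 2, 0, 1, 0, 0, 0;
    0, 0, 0, 0, 0, 0, 0, 0, 0, 0, 0, 2, 0, -1, 2, 0;
    0, 0, 0, 0, 0, 0, 0, 0, 0, 0, 0, 0, 0, 2, 1, 0;
    0, 0, 0, 0, 0, 0, 0, 0, 0, 0, 0, 0, 0, 0, 0, 3]

def k2L : Matrix (Fin 16) (Fin 16) ℤ :=
  !![9, 0, 0, 0, 0, 0, 0, 0, 0, 0, 0, 0, 0, 0, 0, 0;
    0, 5, 0, 0, 4, 0, 0, 0, 0, 0, 0, 0, 0, 0, 0, 0;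
    0, 0, 9, 0, -4, 0, 0, 0, 4, 0, 0, 0, 0, 0, 0, 0;
    0, 0, 0, 5, 0, -4, 4, 0, 0, 4, 0, 0, 0, 0, 0, 0;
    0, 4, -4, 0, 9, 0, 0, 0, 0, 0, 0, 0, 0, 0, 0, 0;
    0, 0, 0, -4, 0, 21, -8, 0, 0, -8, 8, 0, 0, 0, 0, 0;
    0, 0, 0, 4, 0, -8, 9, 0, 0, 8, -8, 0, 4, 0, 0, 0;
    0, 0, 0, 0, 0, 0, 0, 5, 0, 0, 0, 0, 0, 4, 0, 0;
    0, 0, 4, 0, 0, 0, 0, 0, 5, 0, 0, 0, 0, 0, 0, 0;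
    0, 0, 0, 4, 0, -8, 8, 0, 0, 9, -8, 0, 4, 0, 0, 0;
    0, 0, 0, 0, 0, 8, -8, 0, 0, -8, 21, 0, -4, 0, 0, 0;
    0, 0, 0, 0, 0, 0, 0, 0, 0, 0, 0, 9, 0, -4, 4, 0;
    0, 0, 0, 0, 0, 0, 4, 0, 0, 4, -4, 0, 5, 0, 0, 0;
    0, 0, 0, 0, 0, 0, 0, 4, 0, 0, 0, -4, 0, 9, 0, 0;
    0, 0, 0, 0, 0, 0, 0, 0, 0, 0, 0, 4, 0, 0, 5, 0;
    0, 0, 0, 0, 0, 0, 0, 0, 0, 0, 0, 0, 0, 0, 0, 9]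

def n1L : Matrix (Fin 16) (Fin 16) ℤ :=
  !![8, 0, 0, 0, 0, 0, 0, 0, 0, 0, 0, 0, 0, 0, 0, 0;
    0, 0, 4, 0, 4, 0, 0, 0, 0, 0, 0, 0, 0, 0, 0, 0;
    0, 4, 0, 0, 0, 0, 0, 0, 4, 0, 0, 0, 0, 0, 0, 0;
    0, 0, 0, 0, 0, 0, 4, 0, 0, 4, 0, 0, 0, 0, 0, 0;
    0, 4, 0, 0, 0, 0, 0, 0, 4, 0, 0, 0, 0, 0, 0, 0;
    0, 0, 0, 0, 0, 8, -4, 0, 0, -4, 8, 0, 0, 0, 0, 0;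
    0, 0, 0, 4, 0, -4, 0, 0, 0, 8, -4, 0, 4, 0, 0, 0;
    0, 0, 0, 0, 0, 0, 0, 0, 0, 0, 0, 4, 0, 4, 0, 0;
    0, 0, 4, 0, 4, 0, 0, 0, 0, 0, 0, 0, 0, 0, 0, 0;
    0, 0, 0, 4, 0, -4, 8, 0, 0, 0, -4, 0, 4, 0, 0, 0;
    0, 0, 0, 0, 0, 8, -4, 0, 0, -4, 8, 0, 0, 0, 0, 0;
    0, 0, 0, 0, 0, 0, 0, 4, 0, 0, 0, 0, 0, 0, 4, 0;
    0, 0, 0, 0, 0, 0, 4, 0, 0, 4, 0, 0, 0, 0, 0, 0;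
    0, 0, 0, 0, 0, 0, 0, 4, 0, 0, 0, 0, 0, 0, 4, 0;
    0, 0, 0, 0, 0, 0, 0, 0, 0, 0, 0, 4, 0, 4, 0, 0;
    0, 0, 0, 0, 0, 0, 0, 0, 0, 0, 0, 0, 0, 0, 0, 8]

def n12L : Matrix (Fin 16) (Fin 16) ℤ :=
  !![32, 0, 0, 0, 0, 0, 0, 0, 0, 0, 0, 0, 0, 0, 0, 0;
    0, 8, 8, 0, 8, 0, 0, 0, 8, 0, 0, 0, 0, 0, 0, 0;
    0, 8, 8, 0, 8, 0, 0, 0, 8, 0, 0, 0, 0, 0, 0, 0;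
    0, 0, 0, 0, 0, 16, 0, 0, 0, 0, 16, 0, 0, 0, 0, 0;
    0, 8, 8, 0, 8, 0, 0, 0, 8, 0, 0, 0, 0, 0, 0, 0;
    0, 0, 0, 16, 0, -32, 32, 0, 0, 32, -32, 0, 16, 0, 0, 0;
    0, 0, 0, 0, 0, 32, -16, 0, 0, -16, 32, 0, 0, 0, 0, 0;
    0, 0, 0, 0, 0, 0, 0, 8, 0, 0, 0, 8, 0, 8, 8, 0;
    0, 8, 8, 0, 8, 0, 0, 0, 8, 0, 0, 0, 0, 0, 0, 0;
    0, 0, 0, 0, 0, 32, -16, 0, 0, -16, 32, 0, 0, 0, 0, 0;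
    0, 0, 0, 16, 0, -32, 32, 0, 0, 32, -32, 0, 16, 0, 0, 0;
    0, 0, 0, 0, 0, 0, 0, 8, 0, 0, 0, 8, 0, 8, 8, 0;
    0, 0, 0, 0, 0, 16, 0, 0, 0, 0, 16, 0, 0, 0, 0, 0;
    0, 0, 0, 0, 0, 0, 0, 8, 0, 0, 0, 8, 0, 8, 8, 0;
    0, 0, 0, 0, 0, 0, 0, 8, 0, 0, 0, 8, 0, 8, 8, 0;
    0, 0, 0, 0, 0, 0, 0, 0, 0, 0, 0, 0, 0, 0, 0, 32]

def nL : Matrix (Fin 16) (Fin 16) ℤ :=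
  !![0, 0, 0, 0, 0, 0, 0, 0, 0, 0, 0, 0, 0, 0, 0, 0;
    0, 0, 0, 0, 0, 0, 0, 0, 0, 0, 0, 0, 0, 0, 0, 0;
    0, 0, 0, 0, 0, 0, 0, 0, 0, 0, 0, 0, 0, 0, 0, 0;
    0, 0, 0, 32, 0, -96, 64, 0, 0, 64, -96, 0, 32, 0, 0, 0;
    0, 0, 0, 0, 0, 0, 0, 0, 0, 0, 0, 0, 0, 0, 0, 0;
    0, 0, 0, -96, 0, 352, -256, 0, 0, -256, 352, 0, -96, 0, 0, 0;
    0, 0, 0, 64, 0, -256, 192, 0, 0, 192, -256, 0, 64, 0, 0, 0;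
    0, 0, 0, 0, 0, 0, 0, 0, 0, 0, 0, 0, 0, 0, 0, 0;
    0, 0, 0, 0, 0, 0, 0, 0, 0, 0, 0, 0, 0, 0, 0, 0;
    0, 0, 0, 64, 0, -256, 192, 0, 0, 192, -256, 0, 64, 0, 0, 0;
    0, 0, 0, -96, 0, 352, -256, 0, 0, -256, 352, 0, -96, 0, 0, 0;
    0, 0, 0, 0, 0, 0, 0, 0, 0, 0, 0, 0, 0, 0, 0, 0;
    0, 0, 0, 32, 0, -96, 64, 0, 0, 64, -96, 0, 32, 0, 0, 0;
    0, 0, 0, 0, 0, 0, 0, 0, 0, 0, 0, 0, 0, 0, 0, 0;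
    0, 0, 0, 0, 0, 0, 0, 0, 0, 0, 0, 0, 0, 0, 0, 0;
    0, 0, 0, 0, 0, 0, 0, 0, 0, 0, 0, 0, 0, 0, 0, 0]

def vaL : Fin 16 → Zsqrtd 3 := ![(⟨0,0⟩ : Zsqrtd 3), (⟨0,0⟩ : Zsqrtd 3), (⟨0,0⟩ : Zsqrtd 3), (⟨1,0⟩ : Zsqrtd 3), (⟨0,0⟩ : Zsqrtd 3), (⟨-2,-1⟩ : Zsqrtd 3), (⟨1,1⟩ : Zsqrtd 3), (⟨0,0⟩ : Zsqrtd 3), (⟨0,0⟩ : Zsqrtd 3), (⟨1,1⟩ : Zsqrtd 3), (⟨-2,-1⟩ : Zsqrtd 3), (⟨0,0⟩ : Zsqrtd 3), (⟨1,0⟩ : Zsqrtd 3), (⟨0,0⟩ : Zsqrtd 3), (⟨0,0⟩ : Zsqrtd 3), (⟨0,0⟩ : Zsqrtd 3)]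

def vbL : Fin 16 → Zsqrtd 2 := ![(⟨0,0⟩ : Zsqrtd 2), (⟨-1,0⟩ : Zsqrtd 2), (⟨1,1⟩ : Zsqrtd 2), (⟨0,0⟩ : Zsqrtd 2), (⟨-1,-1⟩ : Zsqrtd 2), (⟨0,0⟩ : Zsqrtd 2), (⟨0,0⟩ : Zsqrtd 2), (⟨0,0⟩ : Zsqrtd 2), (⟨1,0⟩ : Zsqrtd 2), (⟨0,0⟩ : Zsqrtd 2), (⟨0,0⟩ : Zsqrtd 2), (⟨0,0⟩ : Zsqrtd 2), (⟨0,0⟩ : Zsqrtd 2), (⟨0,0⟩ : Zsqrtd 2), (⟨0,0⟩ : Zsqrtd 2), (⟨0,0⟩ : Zsqrtd 2)]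

/-! ### The integer Heisenberg matrix, reindexed by the 4-qubit index type -/

abbrev qIdx : Type := Fin 2 × Fin 2 × Fin 2 × Fin 2

def enc : qIdx → Fin 16 :=
  fun p => ⟨p.1.val * 8 + p.2.1.val * 4 + p.2.2.1.val * 2 + p.2.2.2.val, by omega⟩

def kM : Matrix qIdx qIdx ℤ := Matrix.of fun i j => kL (enc i) (enc j)
def k2M : Matrix qIdx qIdx ℤ := Matrix.of fun i j => k2L (enc i) (enc j)
def n1M : Matrix qIdx qIdx ℤ := Matrix.of fun i j => n1L (enc i) (enc j)
def n12M : Matrix qIdx qIdx ℤ := Matrix.of fun i j => n12L (enc i) (enc j)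
def nM : Matrix qIdx qIdx ℤ := Matrix.of fun i j => nL (enc i) (enc j)
def va3 : qIdx → Zsqrtd 3 := fun i => vaL (enc i)
def vb2 : qIdx → Zsqrtd 2 := fun i => vbL (enc i)

/-! ### Decidable matrix identities -/

set_option maxHeartbeats 4000000 in
theorem dk2 : kM * kM = k2M := by decide

set_option maxHeartbeats 4000000 in
theorem dn1 : n1M = k2M + (2 : ℤ) • kM - (7 : ℤ) • 1 := by decide

set_option maxHeartbeats 4000000 in
theorem dn12 : n1M * (kM + 1) = n12M := by decide

set_option maxHeartbeats 4000000 in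
theorem dnM : n12M * (kM - (3 : ℤ) • 1) = nM := by decide

set_option maxHeartbeats 4000000 in
theorem dmin : nM * (k2M + (6 : ℤ) • kM - (3 : ℤ) • 1) = 0 := by decide

set_option maxHeartbeats 4000000 in
theorem drank :
    (nM.map (Int.cast : ℤ → Zsqrtd 3)) *
        ((kM.map (Int.cast : ℤ → Zsqrtd 3)) - (⟨-3, 2⟩ : Zsqrtd 3) • 1) =
      (⟨-64, -64⟩ : Zsqrtd 3) • vecMulVec va3 va3 := by decide

set_option maxHeartbeats 4000000 in
theorem deiga :
    (kM.map (Int.cast : ℤ → Zsqrtd 3)).mulVec va3 = (⟨-3, -2⟩ : Zsqrtd 3) • va3 := by decide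

set_option maxHeartbeats 4000000 in
theorem deigb :
    (kM.map (Int.cast : ℤ → Zsqrtd 2)).mulVec vb2 = (⟨-1, -2⟩ : Zsqrtd 2) • vb2 := by decide

/-! ### Gaussian-integer Pauli matrices and the bridge to `heis4` -/

def gX : Matrix (Fin 2) (Fin 2) GaussianInt := !![0, 1; 1, 0]
def gY : Matrix (Fin 2) (Fin 2) GaussianInt := !![0, -⟨0, 1⟩; ⟨0, 1⟩, 0]
def gZ : Matrix (Fin 2) (Fin 2) GaussianInt := !![1, 0; 0, -1]

def gop4 (A B C D : Matrix (Fin 2) (Fin 2) GaussianInt) : Matrix qIdx qIdx GaussianInt :=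
  A ⊗ₖ (B ⊗ₖ (C ⊗ₖ D))

def gS : Matrix qIdx qIdx GaussianInt :=
  gop4 gX gX 1 1 + gop4 gY gY 1 1 + gop4 gZ gZ 1 1
    + gop4 1 gX gX 1 + gop4 1 gY gY 1 + gop4 1 gZ gZ 1
    + gop4 1 1 gX gX + gop4 1 1 gY gY + gop4 1 1 gZ gZ

set_option maxHeartbeats 4000000 in
theorem dgS : gS = kM.map (Int.cast : ℤ → GaussianInt) := by decide

/-! ### Transfer lemmas -/

lemma map_kron {l m n p : Type*} (φ : GaussianInt →+* ℂ)
    (A : Matrix l m GaussianInt) (B : Matrix n p GaussianInt) :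
    (A ⊗ₖ B).map ⇑φ = (A.map ⇑φ) ⊗ₖ (B.map ⇑φ) := by
  calc (A ⊗ₖ B).map ⇑φ = kroneckerMap (fun a b => φ (a * b)) A B :=
        kroneckerMap_map _ _ _ _
    _ = kroneckerMap (fun a b => φ a * φ b) A B := by simp only [_root_.map_mul]
    _ = kroneckerMap (fun a b => φ a * b) A (B.map ⇑φ) := (kroneckerMap_map_right _ _ _ _).symm
    _ = (A.map ⇑φ) ⊗ₖ (B.map ⇑φ) := (kroneckerMap_map_left _ _ _ _).symm

lemma mapMat_smul {R S : Type*} [CommRing R] [CommRing S] (φ : R →+* S) (s : R)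
    (M : Matrix qIdx qIdx R) : (s • M).map ⇑φ = φ s • M.map ⇑φ := by
  ext i j
  simp [Matrix.map_apply, Matrix.smul_apply, smul_eq_mul, _root_.map_mul]

lemma mapMat_vecMulVec {R S : Type*} [CommRing R] [CommRing S] (φ : R →+* S)
    (w u : qIdx → R) : (vecMulVec w u).map ⇑φ = vecMulVec (⇑φ ∘ w) (⇑φ ∘ u) := by
  ext i j
  simp [Matrix.map_apply, vecMulVec_apply, _root_.map_mul]

lemma mapMat_mulVec {R S : Type*} [CommRing R] [CommRing S] (φ : R →+* S)
    (M : Matrix qIdx qIdx R) (v : qIdx → R) :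
    (M.map ⇑φ).mulVec (⇑φ ∘ v) = ⇑φ ∘ (M.mulVec v) := by
  funext i
  exact (RingHom.map_mulVec φ M v i).symm

lemma vecMulVec_mulVec (w u x : qIdx → ℂ) :
    (vecMulVec w u).mulVec x = (u ⬝ᵥ x) • w := by
  funext i
  simp only [Matrix.mulVec, vecMulVec_apply, dotProduct, Pi.smul_apply, smul_eq_mul,
    Finset.sum_mul]
  exact Finset.sum_congr rfl fun k _ => by ring

/-! ### The complex versions -/

def icC : ℤ →+* ℂ := Int.castRingHom ℂ

def KC : Matrix qIdx qIdx ℂ := kM.map ⇑icC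
def K2C : Matrix qIdx qIdx ℂ := k2M.map ⇑icC
def N1C : Matrix qIdx qIdx ℂ := n1M.map ⇑icC
def N12C : Matrix qIdx qIdx ℂ := n12M.map ⇑icC
def NC : Matrix qIdx qIdx ℂ := nM.map ⇑icC

def φ3 : Zsqrtd 3 →+* ℂ := Complex.ofRealHom.comp (Zsqrtd.toReal (by norm_num))
def φ2 : Zsqrtd 2 →+* ℂ := Complex.ofRealHom.comp (Zsqrtd.toReal (by norm_num))

lemma φ3_val (x y : ℤ) : φ3 ⟨x, y⟩ = ((x : ℝ) + (y : ℝ) * Real.sqrt 3 : ℝ) := by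
  simp [φ3, Zsqrtd.toReal]

lemma φ2_val (x y : ℤ) : φ2 ⟨x, y⟩ = ((x : ℝ) + (y : ℝ) * Real.sqrt 2 : ℝ) := by
  simp [φ2, Zsqrtd.toReal]

def vA : qIdx → ℂ := ⇑φ3 ∘ va3
def vB : qIdx → ℂ := ⇑φ2 ∘ vb2

lemma map3_eq (M : Matrix qIdx qIdx ℤ) :
    (M.map (Int.cast : ℤ → Zsqrtd 3)).map ⇑φ3 = M.map ⇑icC := by
  rw [Matrix.map_map]
  funext i j
  show φ3 (Int.cast (M i j)) = icC (M i j)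
  rw [map_intCast]; simp [icC]

lemma map2_eq (M : Matrix qIdx qIdx ℤ) :
    (M.map (Int.cast : ℤ → Zsqrtd 2)).map ⇑φ2 = M.map ⇑icC := by
  rw [Matrix.map_map]
  funext i j
  show φ2 (Int.cast (M i j)) = icC (M i j)
  rw [map_intCast]; simp [icC]


lemma mapMat_add {R S : Type*} [CommRing R] [CommRing S] (φ : R →+* S)
    (M N : Matrix qIdx qIdx R) : (M + N).map ⇑φ = M.map ⇑φ + N.map ⇑φ := by
  ext i j; simp [Matrix.map_apply]

lemma mapMat_sub {R S : Type*} [CommRing R] [CommRing S] (φ : R →+* S)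
    (M N : Matrix qIdx qIdx R) : (M - N).map ⇑φ = M.map ⇑φ - N.map ⇑φ := by
  ext i j; simp [Matrix.map_apply]

lemma mapMat_one {R S : Type*} [CommRing R] [CommRing S] (φ : R →+* S) :
    (1 : Matrix qIdx qIdx R).map ⇑φ = 1 :=
  Matrix.map_one _ (map_zero φ) (map_one φ)

lemma mapVec_smul {R S : Type*} [CommRing R] [CommRing S] (φ : R →+* S) (s : R) (v : qIdx → R) :
    ⇑φ ∘ (s • v) = φ s • (⇑φ ∘ v) := by
  funext i; simp [smul_eq_mul, _root_.map_mul]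

def aν : ℂ := ((-3 - 2 * Real.sqrt 3 : ℝ) : ℂ)
def dν : ℂ := ((-3 + 2 * Real.sqrt 3 : ℝ) : ℂ)
def sν : ℂ := ((-64 - 64 * Real.sqrt 3 : ℝ) : ℂ)
def bν : ℂ := ((-1 - 2 * Real.sqrt 2 : ℝ) : ℂ)

theorem F1 : KC * KC = K2C := by
  have h : (kM * kM).map ⇑icC = k2M.map ⇑icC := by rw [dk2]
  rwa [Matrix.map_mul] at h

theorem F2 : N1C = K2C + (2 : ℂ) • KC - (7 : ℂ) • 1 := by
  have h : n1M.map ⇑icC = (k2M + (2 : ℤ) • kM - (7 : ℤ) • 1).map ⇑icC := by rw [← dn1]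
  rw [mapMat_sub, mapMat_add, mapMat_smul, mapMat_smul, mapMat_one] at h
  have e2 : icC (2 : ℤ) = (2 : ℂ) := by simp [icC]
  have e7 : icC (7 : ℤ) = (7 : ℂ) := by simp [icC]
  rw [e2, e7] at h
  exact h

theorem F3 : N1C * (KC + 1) = N12C := by
  have h : (n1M * (kM + 1)).map ⇑icC = n12M.map ⇑icC := by rw [dn12]
  rwa [Matrix.map_mul, mapMat_add, mapMat_one] at h

theorem F4 : N12C * (KC - (3 : ℂ) • 1) = NC := by
  have h : (n12M * (kM - (3 : ℤ) • 1)).map ⇑icC = nM.map ⇑icC := by rw [dnM]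
  rw [Matrix.map_mul, mapMat_sub, mapMat_smul, mapMat_one] at h
  have e3 : icC (3 : ℤ) = (3 : ℂ) := by simp [icC]
  rwa [e3] at h

theorem F5 : NC * (K2C + (6 : ℂ) • KC - (3 : ℂ) • 1) = 0 := by
  have h : (nM * (k2M + (6 : ℤ) • kM - (3 : ℤ) • 1)).map ⇑icC
      = (0 : Matrix qIdx qIdx ℤ).map ⇑icC := by rw [dmin]
  rw [Matrix.map_mul, mapMat_sub, mapMat_add, mapMat_smul, mapMat_smul, mapMat_one,
    Matrix.map_zero _ (by simp [icC])] at h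
  have e6 : icC (6 : ℤ) = (6 : ℂ) := by simp [icC]
  have e3 : icC (3 : ℤ) = (3 : ℂ) := by simp [icC]
  rwa [e6, e3] at h

theorem F6 : NC * (KC - dν • 1) = sν • vecMulVec vA vA := by
  have h := congrArg (fun M => M.map ⇑φ3) drank
  rw [Matrix.map_mul, mapMat_sub, mapMat_smul, mapMat_smul, mapMat_one, mapMat_vecMulVec,
    map3_eq, map3_eq] at h
  have ed : φ3 ⟨-3, 2⟩ = dν := by
    rw [φ3_val, dν]; push_cast; ring_nf
  have es : φ3 ⟨-64, -64⟩ = sν := by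
    rw [φ3_val, sν]; push_cast; ring_nf
  rw [ed, es] at h
  exact h

theorem F7 : KC.mulVec vA = aν • vA := by
  have h := mapMat_mulVec φ3 (kM.map (Int.cast : ℤ → Zsqrtd 3)) va3
  rw [map3_eq, deiga, mapVec_smul] at h
  have e : φ3 ⟨-3, -2⟩ = aν := by rw [φ3_val, aν]; push_cast; ring_nf
  rw [e] at h
  exact h

theorem F8 : KC.mulVec vB = bν • vB := by
  have h := mapMat_mulVec φ2 (kM.map (Int.cast : ℤ → Zsqrtd 2)) vb2
  rw [map2_eq, deigb, mapVec_smul] at h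
  have e : φ2 ⟨-1, -2⟩ = bν := by rw [φ2_val, bν]; push_cast; ring_nf
  rw [e] at h
  exact h

theorem pX_eq : pauliX = gX.map ⇑GaussianInt.toComplex := by
  ext i j
  fin_cases i <;> fin_cases j <;>
    simp [pauliX, gX, GaussianInt.toComplex_def']

theorem pY_eq : pauliY = gY.map ⇑GaussianInt.toComplex := by
  ext i j
  fin_cases i <;> fin_cases j <;>
    simp [pauliY, gY, GaussianInt.toComplex_def']

theorem pZ_eq : pauliZ = gZ.map ⇑GaussianInt.toComplex := by
  ext i j
  fin_cases i <;> fin_cases j <;>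
    simp [pauliZ, gZ, GaussianInt.toComplex_def']

theorem one2_eq : (1 : Matrix (Fin 2) (Fin 2) ℂ)
    = (1 : Matrix (Fin 2) (Fin 2) GaussianInt).map ⇑GaussianInt.toComplex :=
  (Matrix.map_one _ (map_zero _) (map_one _)).symm

lemma op4_map (A B C D : Matrix (Fin 2) (Fin 2) GaussianInt) :
    (gop4 A B C D).map ⇑GaussianInt.toComplex
      = op4 (A.map ⇑GaussianInt.toComplex) (B.map ⇑GaussianInt.toComplex)
          (C.map ⇑GaussianInt.toComplex) (D.map ⇑GaussianInt.toComplex) := by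
  simp only [gop4, op4, map_kron]

lemma mapG_eq (M : Matrix qIdx qIdx ℤ) :
    (M.map (Int.cast : ℤ → GaussianInt)).map ⇑GaussianInt.toComplex = M.map ⇑icC := by
  rw [Matrix.map_map]
  funext i j
  show GaussianInt.toComplex (Int.cast (M i j)) = icC (M i j)
  rw [map_intCast]; simp [icC]

theorem hH : heis4 = (-(1/4 : ℂ)) • KC := by
  have hS : heis4 = (-(1/4 : ℂ)) • (gS.map ⇑GaussianInt.toComplex) := by
    rw [heis4, gS]
    congr 1
    simp only [mapMat_add, op4_map, ← pX_eq, ← pY_eq, ← pZ_eq, ← one2_eq]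
  rw [hS, dgS, mapG_eq]
  rfl

theorem hKC : KC = (-4 : ℂ) • heis4 := by
  rw [hH, smul_smul]; norm_num

/-! ### Spectral computations -/

lemma chain2 {x : qIdx → ℂ} {ν : ℂ} (hx : KC.mulVec x = ν • x) :
    K2C.mulVec x = (ν * ν) • x := by
  rw [← F1, ← mulVec_mulVec, hx, mulVec_smul, hx, smul_smul]

lemma chain {x : qIdx → ℂ} {ν : ℂ} (hx : KC.mulVec x = ν • x) :
    NC.mulVec x = ((ν * ν + 2 * ν - 7) * (ν + 1) * (ν - 3)) • x := by
  have h2 := chain2 hx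
  have h1 : N1C.mulVec x = (ν * ν + 2 * ν - 7) • x := by
    rw [F2, sub_mulVec, add_mulVec, smul_mulVec, smul_mulVec, one_mulVec, h2, hx]
    module
  have h12 : N12C.mulVec x = ((ν * ν + 2 * ν - 7) * (ν + 1)) • x := by
    rw [← F3, ← mulVec_mulVec, add_mulVec, one_mulVec, hx, mulVec_add, mulVec_smul, h1]
    module
  rw [← F4, ← mulVec_mulVec, sub_mulVec, smul_mulVec, one_mulVec, hx]
  simp only [mulVec_sub, mulVec_smul, h12]
  module

lemma eig_root {ν : ℂ} {x : qIdx → ℂ} (hx0 : x ≠ 0) (hx : KC.mulVec x = ν • x) :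
    (ν * ν + 2 * ν - 7) * (ν + 1) * (ν - 3) * (ν * ν + 6 * ν - 3) = 0 := by
  have hN := chain hx
  have h2 := chain2 hx
  have h5 : (K2C + (6 : ℂ) • KC - (3 : ℂ) • 1).mulVec x = (ν * ν + 6 * ν - 3) • x := by
    rw [sub_mulVec, add_mulVec, smul_mulVec, smul_mulVec, one_mulVec, h2, hx]
    module
  have h0 : (NC * (K2C + (6 : ℂ) • KC - (3 : ℂ) • 1)).mulVec x = 0 := by
    rw [F5, zero_mulVec]
  rw [← mulVec_mulVec, h5, mulVec_smul, hN, smul_smul] at h0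
  have hc := (smul_eq_zero.mp h0).resolve_right hx0
  linear_combination hc

lemma top_eigvec_span {x : qIdx → ℂ} (hx : KC.mulVec x = aν • x) :
    ∃ c : ℂ, x = c • vA := by
  have hN := chain hx
  have h4 : (KC - dν • 1).mulVec x = (aν - dν) • x := by
    rw [sub_mulVec, smul_mulVec, one_mulVec, hx]
    module
  have h6 : (NC * (KC - dν • 1)).mulVec x
      = ((aν - dν) * ((aν * aν + 2 * aν - 7) * (aν + 1) * (aν - 3))) • x := by
    rw [← mulVec_mulVec, h4, mulVec_smul, hN, smul_smul]
  rw [F6, smul_mulVec, vecMulVec_mulVec] at h6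
  -- h6 : ((aν - dν) * (...)) • x = sν • ((vA ⬝ᵥ x) • vA)   (sides swapped; fix below)
  have hs : Real.sqrt 3 ^ 2 = 3 := Real.sq_sqrt (by norm_num)
  have hs0 : (0 : ℝ) < Real.sqrt 3 := Real.sqrt_pos.mpr (by norm_num)
  have hsC : ((Real.sqrt 3 : ℝ) : ℂ) ^ 2 = 3 := by
    rw [← Complex.ofReal_pow, hs]; norm_num
  have hf1 : aν - dν = ((-4 * Real.sqrt 3 : ℝ) : ℂ) := by
    rw [aν, dν, ← Complex.ofReal_sub]; congr 1; ring
  have hf1' : aν - dν ≠ 0 := by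
    rw [hf1]; rw [Ne, Complex.ofReal_eq_zero]; nlinarith
  have hf2 : aν * aν + 2 * aν - 7 = ((8 + 8 * Real.sqrt 3 : ℝ) : ℂ) := by
    rw [aν]; push_cast; linear_combination 4 * hsC
  have hf2' : aν * aν + 2 * aν - 7 ≠ 0 := by
    rw [hf2, Ne, Complex.ofReal_eq_zero]; nlinarith
  have hf3' : aν + 1 ≠ 0 := by
    rw [aν]
    have : ((-3 - 2 * Real.sqrt 3 : ℝ) : ℂ) + 1 = ((-2 - 2 * Real.sqrt 3 : ℝ) : ℂ) := by
      push_cast; ring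
    rw [this, Ne, Complex.ofReal_eq_zero]; nlinarith
  have hf4' : aν - 3 ≠ 0 := by
    rw [aν]
    have : ((-3 - 2 * Real.sqrt 3 : ℝ) : ℂ) - 3 = ((-6 - 2 * Real.sqrt 3 : ℝ) : ℂ) := by
      push_cast; ring
    rw [this, Ne, Complex.ofReal_eq_zero]; nlinarith
  set c0 : ℂ := (aν - dν) * ((aν * aν + 2 * aν - 7) * (aν + 1) * (aν - 3)) with hc0
  have hc0ne : c0 ≠ 0 := by
    apply mul_ne_zero hf1'
    exact mul_ne_zero (mul_ne_zero hf2' hf3') hf4'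
  refine ⟨c0⁻¹ * (sν * (vA ⬝ᵥ x)), ?_⟩
  have : x = c0⁻¹ • (c0 • x) := by
    rw [smul_smul, inv_mul_cancel₀ hc0ne, one_smul]
  conv_lhs => rw [this, ← h6]
  rw [smul_smul, smul_smul, mul_assoc]

/-! ### Eigenvectors are nonzero -/

lemma hvA1 : vA (0, 0, 1, 1) = 1 := by
  have h : va3 (0, 0, 1, 1) = ⟨1, 0⟩ := by decide
  show φ3 (va3 (0, 0, 1, 1)) = 1
  rw [h, φ3_val]; push_cast; norm_num

lemma hvA0 : vA ≠ 0 := by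
  intro h
  have := congrFun h (0, 0, 1, 1)
  rw [hvA1] at this
  exact one_ne_zero this

lemma hvB1 : vB (1, 0, 0, 0) = 1 := by
  have h : vb2 (1, 0, 0, 0) = ⟨1, 0⟩ := by decide
  show φ2 (vb2 (1, 0, 0, 0)) = 1
  rw [h, φ2_val]; push_cast; norm_num

lemma hvB0 : vB ≠ 0 := by
  intro h
  have := congrFun h (1, 0, 0, 0)
  rw [hvB1] at this
  exact one_ne_zero this

/-! ### Spectrum of the matrix vs. spectrum of the endomorphism -/

lemma spec_eq : spectrum ℂ heis4 = spectrum ℂ (Matrix.mulVecLin heis4) := by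
  have h : Matrix.toLinAlgEquiv' heis4 = Matrix.mulVecLin heis4 := by
    apply LinearMap.ext; intro v
    rw [Matrix.toLinAlgEquiv'_apply, Matrix.mulVecLin_apply]
  rw [← h, AlgEquiv.spectrum_eq]

/-! ### Eigen-equations for `heis4` -/

lemma hvA_eigen :
    heis4.mulVec vA = (((3 + 2 * Real.sqrt 3) / 4 : ℝ) : ℂ) • vA := by
  rw [hH, smul_mulVec, F7, smul_smul]
  congr 1
  rw [aν]; push_cast; ring

lemma hvB_eigen :
    heis4.mulVec vB = (((1 + 2 * Real.sqrt 2) / 4 : ℝ) : ℂ) • vB := by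
  rw [hH, smul_mulVec, F8, smul_smul]
  congr 1
  rw [bν]; push_cast; ring

lemma to_KC {x : qIdx → ℂ} {t : ℝ} (hx : heis4.mulVec x = (t : ℂ) • x) :
    KC.mulVec x = ((-4 * t : ℝ) : ℂ) • x := by
  rw [hKC, smul_mulVec, hx, smul_smul]
  congr 1
  push_cast; ring

theorem heis4_gap :
    Module.finrank ℂ
      (Module.End.eigenspace (Matrix.mulVecLin heis4)
        (((3 + 2 * Real.sqrt 3) / 4 : ℝ) : ℂ)) = 1 ∧
    IsGreatest {x : ℝ | (x : ℂ) ∈ spectrum ℂ heis4 ∧ x ≠ (3 + 2 * Real.sqrt 3) / 4}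
      ((3 + 2 * Real.sqrt 3) / 4 - (1 + Real.sqrt 3 - Real.sqrt 2) / 2) := by
  have hs3 : Real.sqrt 3 ^ 2 = 3 := Real.sq_sqrt (by norm_num)
  have hs2 : Real.sqrt 2 ^ 2 = 2 := Real.sq_sqrt (by norm_num)
  have hs3nn : (0 : ℝ) ≤ Real.sqrt 3 := Real.sqrt_nonneg 3
  have hs2nn : (0 : ℝ) ≤ Real.sqrt 2 := Real.sqrt_nonneg 2
  constructor
  · -- the top eigenspace is one-dimensional
    have heig : Module.End.eigenspace (Matrix.mulVecLin heis4)
        (((3 + 2 * Real.sqrt 3) / 4 : ℝ) : ℂ) = Submodule.span ℂ {vA} := by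
      apply le_antisymm
      · intro x hx
        rw [Module.End.mem_eigenspace_iff, Matrix.mulVecLin_apply] at hx
        have hKx : KC.mulVec x = aν • x := by
          rw [to_KC hx]
          congr 1
          rw [aν]; congr 1; ring
        obtain ⟨c, hc⟩ := top_eigvec_span hKx
        rw [hc]
        exact Submodule.smul_mem _ _ (Submodule.mem_span_singleton_self vA)
      · rw [Submodule.span_le, Set.singleton_subset_iff, SetLike.mem_coe,
          Module.End.mem_eigenspace_iff, Matrix.mulVecLin_apply]
        exact hvA_eigen
    rw [heig]
    exact finrank_span_singleton hvA0
  · constructor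
    · -- membership
      constructor
      · -- in the spectrum
        have hlam : (3 + 2 * Real.sqrt 3) / 4 - (1 + Real.sqrt 3 - Real.sqrt 2) / 2
            = (1 + 2 * Real.sqrt 2) / 4 := by ring
        rw [hlam, spec_eq]
        apply Module.End.hasEigenvalue_iff_mem_spectrum.mp
        apply Module.End.hasEigenvalue_of_hasEigenvector (x := vB)
        constructor
        · rw [Module.End.mem_eigenspace_iff, Matrix.mulVecLin_apply]
          exact hvB_eigen
        · exact hvB0
      · -- not the top eigenvalue
        intro h
        nlinarith [h, hs3, hs2, hs3nn, hs2nn]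
    · -- upper bound
      rintro x ⟨hspec, hne⟩
      rw [spec_eq] at hspec
      have hev : Module.End.HasEigenvalue (Matrix.mulVecLin heis4) ((x : ℝ) : ℂ) :=
        Module.End.hasEigenvalue_iff_mem_spectrum.mpr hspec
      obtain ⟨y, hy⟩ := hev.exists_hasEigenvector
      have hy0 : y ≠ 0 := hy.right
      have hyeq : heis4.mulVec y = ((x : ℝ) : ℂ) • y := by
        have := hy.apply_eq_smul
        rwa [Matrix.mulVecLin_apply] at this
      have hKy := to_KC hyeq
      have hroot := eig_root hy0 hKy
      set ν : ℂ := ((-4 * x : ℝ) : ℂ) with hν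
      set r : ℝ := -4 * x with hr
      have hrootR : (r * r + 2 * r - 7) * (r + 1) * (r - 3) * (r * r + 6 * r - 3) = 0 := by
        have hcast : (((r * r + 2 * r - 7) * (r + 1) * (r - 3) * (r * r + 6 * r - 3) : ℝ) : ℂ)
            = 0 := by
          push_cast
          linear_combination hroot
        exact_mod_cast hcast
      rcases mul_eq_zero.mp hrootR with h123 | h4
      · rcases mul_eq_zero.mp h123 with h12 | h3
        · rcases mul_eq_zero.mp h12 with h1 | h2
          · -- r^2 + 2r - 7 = 0
            nlinarith [h1, sq_nonneg (r + 1 + 2 * Real.sqrt 2), hs2, hs2nn, hs3nn]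
          · -- r = -1
            nlinarith [h2, hs2nn, hs3nn]
        · -- r = 3
          nlinarith [h3, hs2nn, hs3nn]
      · -- r^2 + 6r - 3 = 0
        have hfac : (r + 3 - 2 * Real.sqrt 3) * (r + 3 + 2 * Real.sqrt 3) = 0 := by
          linear_combination h4 - 4 * hs3
        rcases mul_eq_zero.mp hfac with h | h
        · nlinarith [h, hs3, hs2nn, hs3nn]
        · exfalso
          apply hne
          have : r = -3 - 2 * Real.sqrt 3 := by linarith
          rw [hr] at this
          linarith

end
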